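/- If 2j − k ≤ m < j ≤ k−2, then an (m,j)-star of size r percolates in K_n^k under the j-set bootstrap percolation process with infection threshold r, for n sufficiently large. Consequently, for j ≤ k−2 the minimum size of a contagious j-configuration equals r: ℓ_n(k,j,r) = r. -/

import Mathlib

open Finset

open Classical in
noncomputable def bootStep (V : Finset ℕ) (E : Finset (Finset ℕ)) (j r : ℕ)
    (A : Finset (Finset ℕ)) : Finset (Finset ℕ) :=
  A ∪ (V.powersetCard j).filter (fun J =>
    ∃ K : Fin r → Finset ℕ, ∃ Js : Fin r → Finset ℕ,
      Function.Injective K ∧ Function.Injective Js ∧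
      ∀ i : Fin r, K i ∈ E ∧ Js i ∈ A ∧ Js i ∪ J ⊆ K i)

/-- The infected sets at time `t` of the bootstrap percolation process on a hypergraph
with vertex set `V`, edge set `E`, evolving on `j`-sets with infection threshold `r`. -/
noncomputable def bootProc (V : Finset ℕ) (E : Finset (Finset ℕ)) (j r : ℕ)
    (A0 : Finset (Finset ℕ)) (t : ℕ) : Finset (Finset ℕ) :=
  (bootStep V E j r)^[t] A0

/-- The process on the complete `k`-uniform hypergraph on `V`. -/
noncomputable def compProc (V : Finset ℕ) (k j r : ℕ)
    (A0 : Finset (Finset ℕ)) (t : ℕ) : Finset (Finset ℕ) :=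
  bootProc V (V.powersetCard k) j r A0 t

/-- `A0` is contagious: eventually all `j`-sets of `V` are infected. -/
def Percolates (V : Finset ℕ) (k j r : ℕ) (A0 : Finset (Finset ℕ)) : Prop :=
  ∃ t, compProc V k j r A0 t = V.powersetCard j

/-- `ℓ_n(k,j,r)`: minimum size of a contagious `j`-configuration in `K_n^k`. -/
noncomputable def ellMin (n k j r : ℕ) : ℕ :=
  sInf {m | ∃ A0 : Finset (Finset ℕ), A0 ⊆ (range n).powersetCard j ∧
    A0.card = m ∧ Percolates (range n) k j r A0}

open Classical in
/-- The extension set of a `(k-1)`-set `J` with respect to configuration `C` in the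
complete `k`-uniform hypergraph on `V`. -/
noncomputable def extSet (V : Finset ℕ) (k : ℕ) (C : Finset (Finset ℕ))
    (J : Finset ℕ) : Finset ℕ :=
  V.filter (fun v => ∃ J' ∈ C, J' ≠ J ∧ J' ⊆ insert v J ∧ insert v J ∈ V.powersetCard k)

/-- An (m,j)-star with centre M: distinct j-sets every two of which intersect
precisely in the common m-set M. -/
def IsStar (m j : ℕ) (M : Finset ℕ) (S : Finset (Finset ℕ)) : Prop :=
  M.card = m ∧ (∀ J ∈ S, J.card = j ∧ M ⊆ J) ∧
  ∀ J1 ∈ S, ∀ J2 ∈ S, J1 ≠ J2 → J1 ∩ J2 = M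

section Aux

lemma exists_inj_fun {α : Type*} (s : Finset α) (N : ℕ) (h : N ≤ s.card) :
    ∃ g : Fin N → α, Function.Injective g ∧ ∀ a, g a ∈ s := by
  obtain ⟨t, hts, htc⟩ := Finset.exists_subset_card_eq (s := s) (n := N) h
  refine ⟨fun a => (t.equivFin.symm (Fin.cast htc.symm a) : α), ?_, ?_⟩
  · intro a b hab
    exact Fin.cast_injective _ (t.equivFin.symm.injective (Subtype.coe_injective hab))
  · intro a
    exact hts (t.equivFin.symm (Fin.cast htc.symm a)).2

lemma subset_bootStep (V : Finset ℕ) (E : Finset (Finset ℕ)) (j r : ℕ)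
    (A : Finset (Finset ℕ)) : A ⊆ bootStep V E j r A := by
  unfold bootStep; exact subset_union_left

lemma bootProc_succ (V : Finset ℕ) (E : Finset (Finset ℕ)) (j r : ℕ)
    (A0 : Finset (Finset ℕ)) (t : ℕ) :
    bootProc V E j r A0 (t+1) = bootStep V E j r (bootProc V E j r A0 t) :=
  Function.iterate_succ_apply' _ _ _

lemma bootProc_mono_time (V : Finset ℕ) (E : Finset (Finset ℕ)) (j r : ℕ)
    (A0 : Finset (Finset ℕ)) {s t : ℕ} (h : s ≤ t) :
    bootProc V E j r A0 s ⊆ bootProc V E j r A0 t := by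
  induction t, h using Nat.le_induction with
  | base => exact subset_rfl
  | succ t ht ih =>
      refine ih.trans ?_
      rw [bootProc_succ]
      exact subset_bootStep _ _ _ _ _

lemma compProc_mono_time (V : Finset ℕ) (k j r : ℕ)
    (A0 : Finset (Finset ℕ)) {s t : ℕ} (h : s ≤ t) :
    compProc V k j r A0 s ⊆ compProc V k j r A0 t :=
  bootProc_mono_time _ _ _ _ _ h

lemma compProc_zero (V : Finset ℕ) (k j r : ℕ) (A0 : Finset (Finset ℕ)) :
    compProc V k j r A0 0 = A0 := rfl

end Aux

lemma exists_K (V : Finset ℕ) (k r : ℕ) (U : Fin r → Finset ℕ)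
    (hU : ∀ i, U i ⊆ V) (hc : ∀ i, (U i).card ≤ k)
    (hfull : ∀ i i', U i = U i' → (U i).card = k → i = i')
    (hV : 2 * (r * k) ≤ V.card) :
    ∃ K : Fin r → Finset ℕ, Function.Injective K ∧
      ∀ i, K i ∈ V.powersetCard k ∧ U i ⊆ K i := by
  classical
  set Uall : Finset ℕ := Finset.univ.biUnion U with hUall
  have hUallsub : Uall ⊆ V := by
    intro x hx
    obtain ⟨i, _, hxi⟩ := mem_biUnion.mp hx
    exact hU i hxi
  have hUallcard : Uall.card ≤ r * k := by
    refine le_trans (card_biUnion_le) ?_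
    calc ∑ i : Fin r, (U i).card ≤ ∑ _i : Fin r, k := by
          exact Finset.sum_le_sum (fun i _ => hc i)
      _ = r * k := by simp [mul_comm]
  have hpool : r * k ≤ (V \ Uall).card := by
    have h1 := Finset.card_le_card_sdiff_add_card (s := V) (t := Uall)
    omega
  obtain ⟨g, hginj, hgmem⟩ := exists_inj_fun (V \ Uall) (r * k) hpool
  set gp : Fin r → Fin k → ℕ := fun i b => g (finProdFinEquiv (i, b)) with hgp
  have hgpinj : ∀ i b i' b', gp i b = gp i' b' → i = i' ∧ b = b' := by
    intro i b i' b' h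
    have := hginj h
    have := finProdFinEquiv.injective this
    exact ⟨(Prod.mk.injEq _ _ _ _ ▸ this).1, (Prod.mk.injEq _ _ _ _ ▸ this).2⟩
  set D : Fin r → Finset ℕ := fun i => Finset.univ.image (gp i) with hD
  have hDcard : ∀ i, (D i).card = k := by
    intro i
    rw [hD]
    rw [Finset.card_image_of_injective _ (fun b b' h => (hgpinj i b i b' h).2)]
    simp
  have hDsub : ∀ i, D i ⊆ V \ Uall := by
    intro i x hx
    obtain ⟨b, _, rfl⟩ := mem_image.mp hx
    exact hgmem _
  have hDdisj : ∀ i i', i ≠ i' → ∀ x, x ∈ D i → x ∉ D i' := by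
    intro i i' hne x hx hx'
    obtain ⟨b, _, hb⟩ := mem_image.mp hx
    obtain ⟨b', _, hb'⟩ := mem_image.mp hx'
    exact hne (hgpinj i b i' b' (hb.trans hb'.symm)).1
  have hpad : ∀ i : Fin r, ∃ p ⊆ D i, p.card = k - (U i).card := by
    intro i
    exact Finset.exists_subset_card_eq (s := D i) (n := k - (U i).card) (by rw [hDcard i]; omega)
  choose pad hpadsub hpadcard using hpad
  refine ⟨fun i => U i ∪ pad i, ?_, ?_⟩
  · intro i i' h0
    have h : U i ∪ pad i = U i' ∪ pad i' := h0
    by_contra hne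
    have hdisji : ∀ i₀, Disjoint (U i₀) (pad i₀) := by
      intro i₀
      refine Finset.disjoint_left.mpr (fun x hx hx' => ?_)
      have := hDsub i₀ (hpadsub i₀ hx')
      exact (mem_sdiff.mp this).2 (mem_biUnion.mpr ⟨i₀, mem_univ _, hx⟩)
    have hKcard : ∀ i₀, (U i₀ ∪ pad i₀).card = k := by
      intro i₀
      rw [card_union_of_disjoint (hdisji i₀), hpadcard i₀]
      have := hc i₀; omega
    by_cases hfi : (U i).card = k
    · by_cases hfi' : (U i').card = k
      · -- both pads empty
        have hpe : pad i = ∅ := Finset.card_eq_zero.mp (by rw [hpadcard]; omega)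
        have hpe' : pad i' = ∅ := Finset.card_eq_zero.mp (by rw [hpadcard]; omega)
        rw [hpe, hpe', union_empty, union_empty] at h
        exact hne (hfull i i' h hfi)
      · -- pad i' nonempty
        have : 0 < (pad i').card := by rw [hpadcard]; have := hc i'; omega
        obtain ⟨x, hx⟩ := Finset.card_pos.mp this
        have hxK : x ∈ U i ∪ pad i := h ▸ (mem_union_right _ hx)
        rcases mem_union.mp hxK with hxU | hxp
        · have := hDsub i' (hpadsub i' hx)
          exact (mem_sdiff.mp this).2 (mem_biUnion.mpr ⟨i, mem_univ _, hxU⟩)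
        · exact hDdisj i' i (Ne.symm hne) x (hpadsub i' hx) (hpadsub i hxp)
    · -- pad i nonempty
      have : 0 < (pad i).card := by rw [hpadcard]; have := hc i; omega
      obtain ⟨x, hx⟩ := Finset.card_pos.mp this
      have hxK : x ∈ U i' ∪ pad i' := h ▸ (mem_union_right _ hx)
      rcases mem_union.mp hxK with hxU | hxp
      · have := hDsub i (hpadsub i hx)
        exact (mem_sdiff.mp this).2 (mem_biUnion.mpr ⟨i', mem_univ _, hxU⟩)
      · exact hDdisj i i' hne x (hpadsub i hx) (hpadsub i' hxp)
  · intro i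
    constructor
    · rw [mem_powersetCard]
      constructor
      · exact union_subset (hU i) (((hpadsub i).trans (hDsub i)).trans sdiff_subset)
      · have hdisji : Disjoint (U i) (pad i) := by
          refine Finset.disjoint_left.mpr (fun x hx hx' => ?_)
          have := hDsub i (hpadsub i hx')
          exact (mem_sdiff.mp this).2 (mem_biUnion.mpr ⟨i, mem_univ _, hx⟩)
        rw [card_union_of_disjoint hdisji, hpadcard i]
        have := hc i; omega
    · exact subset_union_left

lemma infect (V : Finset ℕ) (k j r : ℕ) (A0 : Finset (Finset ℕ)) (J : Finset ℕ)
    (hJ : J ∈ V.powersetCard j)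
    (Js : Fin r → Finset ℕ) (hinj : Function.Injective Js)
    (hmem : ∀ i, ∃ t, Js i ∈ compProc V k j r A0 t)
    (hsub : ∀ i, Js i ⊆ V) (hcard : ∀ i, (Js i ∪ J).card ≤ k)
    (hfull : ∀ i i', Js i ∪ J = Js i' ∪ J → (Js i ∪ J).card = k → i = i')
    (hV : 2 * (r * k) ≤ V.card) :
    ∃ t, J ∈ compProc V k j r A0 t := by
  classical
  choose ts hts using hmem
  set T := Finset.univ.sup ts with hT
  have hJsT : ∀ i, Js i ∈ compProc V k j r A0 T := fun i =>
    compProc_mono_time _ _ _ _ _ (Finset.le_sup (mem_univ i)) (hts i)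
  obtain ⟨K, hKinj, hK⟩ := exists_K V k r (fun i => Js i ∪ J)
    (fun i => union_subset (hsub i) (mem_powersetCard.mp hJ).1) hcard hfull hV
  refine ⟨T + 1, ?_⟩
  show J ∈ bootProc V (V.powersetCard k) j r A0 (T + 1)
  rw [bootProc_succ]
  unfold bootStep
  refine mem_union_right _ (mem_filter.mpr ⟨hJ, K, Js, hKinj, hinj, fun i => ?_⟩)
  exact ⟨(hK i).1, hJsT i, (hK i).2⟩

lemma star_stage1 (k j r m n : ℕ) (hm1 : 2 * j ≤ k + m)
    (M : Finset ℕ) (S : Finset (Finset ℕ))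
    (hSn : ∀ J ∈ S, J ⊆ range n) (hstar : IsStar m j M S) (hSr : S.card = r)
    (hV : 2 * (r * k) ≤ n)
    (J : Finset ℕ) (hJ : J ∈ (range n).powersetCard j) (hMJ : M ⊆ J) :
    ∃ t, J ∈ compProc (range n) k j r S t := by
  classical
  obtain ⟨e, einj, eS⟩ := exists_inj_fun S r (le_of_eq hSr.symm)
  obtain ⟨hJsub, hJcard⟩ := mem_powersetCard.mp hJ
  have hecard : ∀ i, (e i).card = j := fun i => (hstar.2.1 _ (eS i)).1
  have heM : ∀ i, M ⊆ e i := fun i => (hstar.2.1 _ (eS i)).2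
  refine infect _ k j r S J hJ e einj (fun i => ⟨0, by rw [compProc_zero]; exact eS i⟩)
    (fun i => hSn _ (eS i)) ?_ ?_ (by rwa [card_range])
  · intro i
    have h1 := Finset.card_union_add_card_inter (e i) J
    have h2 : m ≤ ((e i) ∩ J).card := by
      have : M ⊆ (e i) ∩ J := subset_inter (heM i) hMJ
      calc m = M.card := hstar.1.symm
        _ ≤ _ := card_le_card this
    have := hecard i
    omega
  · intro i i' h hck
    by_contra hne
    have hnee : e i ≠ e i' := fun hh => hne (einj hh)
    have hMi : (e i) ∩ (e i') = M := hstar.2.2 _ (eS i) _ (eS i') hnee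
    have hd : e i \ J = e i' \ J := by
      rw [← union_sdiff_right, h, union_sdiff_right]
    have hsub1 : e i \ J ⊆ M := by
      rw [← hMi]
      exact subset_inter sdiff_subset (hd ▸ sdiff_subset)
    have hempty : e i \ J = ∅ := by
      rw [← Finset.subset_empty]
      intro x hx
      have hxJ : x ∈ J := hMJ (hsub1 hx)
      exact absurd hxJ (mem_sdiff.mp hx).2
    have hi : e i ⊆ J := by
      intro x hx
      by_cases hxJ : x ∈ J
      · exact hxJ
      · exact absurd (mem_sdiff.mpr ⟨hx, hxJ⟩) (by rw [hempty]; exact notMem_empty x)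
    have hi' : e i' ⊆ J := by
      intro x hx
      by_cases hxJ : x ∈ J
      · exact hxJ
      · exact absurd (mem_sdiff.mpr ⟨hx, hxJ⟩)
          (by rw [← hd, hempty]; exact notMem_empty x)
    have : e i = J := Finset.eq_of_subset_of_card_le hi (by rw [hecard, hJcard])
    have h2 : e i' = J := Finset.eq_of_subset_of_card_le hi' (by rw [hecard, hJcard])
    exact hnee (this.trans h2.symm)

lemma all_infected (k j r m n : ℕ) (hm1 : 2 * j ≤ k + m) (hmj : m < j)
    (hjk : j ≤ k - 2) (hr : 1 ≤ r)
    (M : Finset ℕ) (S : Finset (Finset ℕ))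
    (hSn : ∀ J ∈ S, J ⊆ range n) (hstar : IsStar m j M S) (hSr : S.card = r)
    (hn : 2 * (r * k) + j + m + r ≤ n) :
    ∀ s : ℕ, ∀ M' : Finset ℕ, M' ⊆ range n → M'.card = m → (M \ M').card ≤ s →
      ∀ J ∈ (range n).powersetCard j, M' ⊆ J →
        ∃ t, J ∈ compProc (range n) k j r S t := by
  classical
  have hMcard : M.card = m := hstar.1
  have hMn : M ⊆ range n := by
    obtain ⟨J0, hJ0⟩ := Finset.card_pos.mp (by rw [hSr]; omega : 0 < S.card)
    exact (hstar.2.1 _ hJ0).2.trans (hSn _ hJ0)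
  have hk3 : j + 2 ≤ k := by omega
  intro s
  induction s with
  | zero =>
      intro M' hM'n hM'c hMM' J hJ hM'J
      have hMsub : M ⊆ M' := by
        intro x hx
        by_contra hx'
        have : x ∈ M \ M' := mem_sdiff.mpr ⟨hx, hx'⟩
        have := card_pos.mpr ⟨x, this⟩
        omega
      have heq : M' = M := (Finset.eq_of_subset_of_card_le hMsub (by omega)).symm
      exact star_stage1 k j r m n hm1 M S hSn hstar hSr (by omega) J hJ (heq ▸ hM'J)
  | succ s ih =>
      intro M' hM'n hM'c hMM' J hJ hM'J
      by_cases hle : (M \ M').card ≤ s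
      · exact ih M' hM'n hM'c hle J hJ hM'J
      have hcMM' : (M \ M').card = s + 1 := by omega
      obtain ⟨x, hx⟩ := card_pos.mp (by omega : 0 < (M \ M').card)
      have hxM : x ∈ M := (mem_sdiff.mp hx).1
      have hxM' : x ∉ M' := (mem_sdiff.mp hx).2
      have hM'Mne : 0 < (M' \ M).card := by
        have h1 := Finset.card_sdiff_add_card_inter M M'
        have h2 := Finset.card_sdiff_add_card_inter M' M
        rw [inter_comm] at h2
        omega
      obtain ⟨y, hy⟩ := card_pos.mp hM'Mne
      have hyM' : y ∈ M' := (mem_sdiff.mp hy).1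
      have hyM : y ∉ M := (mem_sdiff.mp hy).2
      set M'' : Finset ℕ := insert x (M'.erase y) with hM''
      have hm1' : 1 ≤ m := by
        have := card_pos.mpr ⟨y, hyM'⟩; omega
      have hM''c : M''.card = m := by
        rw [hM'', card_insert_of_notMem (fun hc => hxM' (mem_of_mem_erase hc)),
          card_erase_of_mem hyM']
        omega
      have hM''n : M'' ⊆ range n := by
        rw [hM'']
        exact insert_subset (hMn hxM) ((erase_subset _ _).trans hM'n)
      have hMM'' : (M \ M'').card ≤ s := by
        have hsub : M \ M'' ⊆ (M \ M').erase x := by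
          intro z hz
          obtain ⟨hzM, hzM''⟩ := mem_sdiff.mp hz
          rw [hM''] at hzM''
          simp only [mem_insert, mem_erase] at hzM''
          push_neg at hzM''
          refine mem_erase.mpr ⟨hzM''.1, mem_sdiff.mpr ⟨hzM, fun hzM' => ?_⟩⟩
          have hzy : z ≠ y := fun h => hyM (h ▸ hzM)
          exact (hzM''.2 hzy) hzM'
        calc (M \ M'').card ≤ ((M \ M').erase x).card := card_le_card hsub
          _ = s := by rw [card_erase_of_mem hx]; omega
      obtain ⟨hJsub, hJcard⟩ := mem_powersetCard.mp hJ
      -- choose T ⊆ J \ M'' of size j - m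
      have hJM'' : j - m ≤ (J \ M'').card := by
        have h1 := Finset.card_sdiff_add_card_inter J M''
        have h2 : (J ∩ M'').card ≤ m := by
          rw [← hM''c]; exact card_le_card inter_subset_right
        omega
      obtain ⟨T, hTsub, hTcard⟩ := Finset.exists_subset_card_eq (s := J \ M'') (n := j - m) hJM''
      obtain ⟨t0, ht0⟩ := card_pos.mp (by omega : 0 < T.card)
      -- fresh vertices
      have hwpool : r ≤ ((range n) \ (J ∪ M'')).card := by
        have h1 := Finset.card_le_card_sdiff_add_card (s := range n) (t := J ∪ M'')
        have h2 : (J ∪ M'').card ≤ j + m := by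
          calc (J ∪ M'').card ≤ J.card + M''.card := card_union_le _ _
            _ = j + m := by omega
        rw [card_range] at h1
        omega
      obtain ⟨w, hwinj, hwmem⟩ := exists_inj_fun _ r hwpool
      have hwJ : ∀ i, w i ∉ J ∪ M'' := fun i => (mem_sdiff.mp (hwmem i)).2
      have hwn : ∀ i, w i ∈ range n := fun i => (mem_sdiff.mp (hwmem i)).1
      set Base : Finset ℕ := M'' ∪ T.erase t0 with hBase
      have hBaseJ : Base ⊆ M'' ∪ J := by
        rw [hBase]
        exact union_subset_union subset_rfl (((erase_subset _ _).trans hTsub).trans sdiff_subset)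
      have hBasecard : Base.card = j - 1 := by
        rw [hBase, card_union_of_disjoint, card_erase_of_mem ht0, hTcard]
        · omega
        · refine Finset.disjoint_left.mpr (fun z hz hz' => ?_)
          have := hTsub (mem_of_mem_erase hz')
          exact (mem_sdiff.mp this).2 hz
      set Js : Fin r → Finset ℕ := fun i => insert (w i) Base with hJs
      have hwBase : ∀ i, w i ∉ Base := by
        intro i hc
        rcases mem_union.mp (hBaseJ hc) with h | h
        · exact hwJ i (mem_union_right _ h)
        · exact hwJ i (mem_union_left _ h)
      have hJscard : ∀ i, (Js i).card = j := by
        intro i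
        rw [hJs]
        simp only
        rw [card_insert_of_notMem (hwBase i), hBasecard]
        omega
      have hJssub : ∀ i, Js i ⊆ range n := by
        intro i
        rw [hJs]
        simp only
        refine insert_subset (hwn i) (hBaseJ.trans (union_subset hM''n hJsub))
      have hJsinj : Function.Injective Js := by
        intro i i' h
        simp only [hJs] at h
        have : w i ∈ insert (w i') Base := h ▸ mem_insert_self _ _
        rcases mem_insert.mp this with h' | h'
        · exact hwinj h'
        · exact absurd h' (hwBase i)
      have hJsM'' : ∀ i, M'' ⊆ Js i := by
        intro i
        rw [hJs]
        exact (subset_union_left.trans (subset_insert _ _) : M'' ⊆ _)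
      -- each Js i is infected by IH
      have hJsinf : ∀ i, ∃ t, Js i ∈ compProc (range n) k j r S t := by
        intro i
        refine ih M'' hM''n hM''c hMM'' (Js i) (mem_powersetCard.mpr ⟨hJssub i, hJscard i⟩)
          (hJsM'' i)
      -- union bound
      have hJsU : ∀ i, Js i ∪ J ⊆ insert (w i) (insert x J) := by
        intro i
        rw [hJs]
        simp only
        rw [insert_union]
        refine insert_subset_insert _ (union_subset ?_ (subset_insert _ _))
        refine hBaseJ.trans (union_subset ?_ (subset_insert _ _))
        rw [hM'']
        exact insert_subset_insert _ ((erase_subset _ _).trans hM'J)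
      refine infect _ k j r S J hJ Js hJsinj hJsinf hJssub ?_ ?_ (by rw [card_range]; omega)
      · intro i
        calc (Js i ∪ J).card ≤ (insert (w i) (insert x J)).card := card_le_card (hJsU i)
          _ ≤ j + 2 := by
              calc (insert (w i) (insert x J)).card ≤ (insert x J).card + 1 :=
                    card_insert_le _ _
                _ ≤ (J.card + 1) + 1 := by
                    have := card_insert_le x J; omega
                _ = j + 2 := by omega
          _ ≤ k := hk3
      · intro i i' h _
        have hwi : w i ∈ Js i' ∪ J := by
          rw [← h]
          exact mem_union_left _ (by rw [hJs]; exact mem_insert_self _ _)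
        rcases mem_union.mp hwi with h' | h'
        · rw [hJs] at h'
          rcases mem_insert.mp h' with h'' | h''
          · exact hwinj h''
          · exact absurd h'' (hwBase i)
        · exact absurd (mem_union_left _ h') (hwJ i)

lemma compProc_subset_powersetCard (V : Finset ℕ) (k j r : ℕ)
    (A0 : Finset (Finset ℕ)) (h : A0 ⊆ V.powersetCard j) (t : ℕ) :
    compProc V k j r A0 t ⊆ V.powersetCard j := by
  classical
  induction t with
  | zero => exact h
  | succ t ih =>
      show bootProc V (V.powersetCard k) j r A0 (t+1) ⊆ _
      rw [bootProc_succ]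
      unfold bootStep
      exact union_subset ih (filter_subset _ _)

lemma star_percolates (k j r m n : ℕ) (hm1 : 2 * j ≤ k + m) (hmj : m < j)
    (hjk : j ≤ k - 2) (hr : 1 ≤ r)
    (M : Finset ℕ) (S : Finset (Finset ℕ))
    (hSn : ∀ J ∈ S, J ⊆ range n) (hstar : IsStar m j M S) (hSr : S.card = r)
    (hn : 2 * (r * k) + j + m + r ≤ n) :
    Percolates (range n) k j r S := by
  classical
  have hS0 : S ⊆ (range n).powersetCard j := by
    intro J hJ
    exact mem_powersetCard.mpr ⟨hSn _ hJ, (hstar.2.1 _ hJ).1⟩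
  have hall : ∀ J ∈ (range n).powersetCard j, ∃ t, J ∈ compProc (range n) k j r S t := by
    intro J hJ
    obtain ⟨hJsub, hJcard⟩ := mem_powersetCard.mp hJ
    obtain ⟨M', hM'J, hM'c⟩ := Finset.exists_subset_card_eq (s := J) (n := m) (by omega)
    refine all_infected k j r m n hm1 hmj hjk hr M S hSn hstar hSr hn m M'
      (hM'J.trans hJsub) hM'c ?_ J hJ hM'J
    calc (M \ M').card ≤ M.card := card_le_card sdiff_subset
      _ = m := hstar.1
  set f : Finset ℕ → ℕ := fun J => sInf {t | J ∈ compProc (range n) k j r S t} with hf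
  refine ⟨((range n).powersetCard j).sup f,
    Subset.antisymm (compProc_subset_powersetCard _ _ _ _ _ hS0 _) ?_⟩
  intro J hJ
  have hne : {t | J ∈ compProc (range n) k j r S t}.Nonempty := hall J hJ
  have hmem := Nat.sInf_mem hne
  exact compProc_mono_time _ _ _ _ _ (Finset.le_sup hJ) hmem

lemma star_construct (m j r n : ℕ) (hmj : m < j) (hn : m + r * j ≤ n) :
    ∃ S : Finset (Finset ℕ), (∀ J ∈ S, J ⊆ range n) ∧ IsStar m j (range m) S ∧
      S.card = r := by
  classical
  set d := j - m with hd
  have hd1 : 1 ≤ d := by omega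
  set st : ℕ → ℕ := fun i => m + i * d with hst
  set Jf : ℕ → Finset ℕ := fun i => range m ∪ Ico (st i) (st i + d) with hJf
  have hstm : ∀ i, m ≤ st i := fun i => Nat.le_add_right _ _
  have hstmono : ∀ i i' : ℕ, i < i' → st i + d ≤ st i' := by
    intro i i' h
    have h1 : (i + 1) * d ≤ i' * d := Nat.mul_le_mul_right d h
    have e1 : st i + d = m + (i + 1) * d := by simp only [hst]; ring
    rw [e1]
    exact Nat.add_le_add_left h1 m
  have hIson : ∀ i, i < r → st i + d ≤ n := by
    intro i hi
    have h1 : (i + 1) * d ≤ r * d := Nat.mul_le_mul_right d hi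
    have h2 : r * d ≤ r * j := Nat.mul_le_mul_left r (by omega)
    have e1 : st i + d = m + (i + 1) * d := by simp only [hst]; ring
    rw [e1]
    calc m + (i + 1) * d ≤ m + r * d := Nat.add_le_add_left h1 m
      _ ≤ m + r * j := Nat.add_le_add_left h2 m
      _ ≤ n := hn
  have hdisjR : ∀ i, Disjoint (range m) (Ico (st i) (st i + d)) := by
    intro i
    refine Finset.disjoint_left.mpr fun z hz hz' => ?_
    have h1 := mem_range.mp hz
    have h2 := (mem_Ico.mp hz').1
    have := hstm i
    omega
  have hJcard : ∀ i, (Jf i).card = j := by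
    intro i
    simp only [hJf]
    rw [card_union_of_disjoint (hdisjR i), card_range, Nat.card_Ico]
    omega
  have hIcoDisj : ∀ i i' : ℕ, i < i' →
      Disjoint (Ico (st i) (st i + d)) (Ico (st i') (st i' + d)) := by
    intro i i' h
    refine Finset.disjoint_left.mpr fun z hz hz' => ?_
    have a1 := (mem_Ico.mp hz).2
    have a2 := (mem_Ico.mp hz').1
    have := hstmono i i' h
    omega
  have hinterlt : ∀ i i' : ℕ, i < i' → Jf i ∩ Jf i' = range m := by
    intro i i' h
    simp only [hJf]
    ext z
    simp only [mem_inter, mem_union]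
    constructor
    · rintro ⟨h1 | h1, h2 | h2⟩
      · exact h1
      · exact h1
      · exact h2
      · exact absurd h2 (Finset.disjoint_left.mp (hIcoDisj i i' h) h1)
    · exact fun h => ⟨Or.inl h, Or.inl h⟩
  have hinter : ∀ i i' : ℕ, i ≠ i' → Jf i ∩ Jf i' = range m := by
    intro i i' hne
    rcases lt_or_gt_of_ne hne with h | h
    · exact hinterlt i i' h
    · rw [inter_comm]; exact hinterlt i' i h
  have hJfinj : ∀ i i' : ℕ, Jf i = Jf i' → i = i' := by
    intro i i' h
    by_contra hne
    have h1 : Jf i ∩ Jf i' = range m := hinter i i' hne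
    rw [← h, inter_self] at h1
    have := hJcard i
    rw [h1, card_range] at this
    omega
  refine ⟨(range r).image Jf, ?_, ⟨card_range m, ?_, ?_⟩, ?_⟩
  · intro J hJ
    obtain ⟨i, hi, rfl⟩ := mem_image.mp hJ
    have hi' := mem_range.mp hi
    simp only [hJf]
    refine union_subset (range_subset_range.mpr (by omega)) ?_
    intro z hz
    have := (mem_Ico.mp hz).2
    have := hIson i hi'
    exact mem_range.mpr (by omega)
  · intro J hJ
    obtain ⟨i, hi, rfl⟩ := mem_image.mp hJ
    refine ⟨hJcard i, ?_⟩
    simp only [hJf]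
    exact subset_union_left
  · intro J1 hJ1 J2 hJ2 hne
    obtain ⟨i1, _, rfl⟩ := mem_image.mp hJ1
    obtain ⟨i2, _, rfl⟩ := mem_image.mp hJ2
    exact hinter i1 i2 (fun h => hne (h ▸ rfl))
  · rw [card_image_of_injOn (fun i _ i' _ h => hJfinj i i' h), card_range]

lemma no_small_percolates (n k j r q : ℕ) (hq : q < r) (hrj : r ≤ n.choose j)
    (A0 : Finset (Finset ℕ)) (hcard : A0.card = q) :
    ¬ Percolates (range n) k j r A0 := by
  classical
  rintro ⟨t, ht⟩
  have hfix : ∀ t, compProc (range n) k j r A0 t = A0 := by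
    intro t
    induction t with
    | zero => rfl
    | succ t ih =>
        show bootProc _ _ _ _ _ (t + 1) = A0
        rw [bootProc_succ]
        have hcp : bootProc (range n) ((range n).powersetCard k) j r A0 t = A0 := ih
        rw [hcp]
        unfold bootStep
        refine Subset.antisymm (union_subset subset_rfl ?_) subset_union_left
        intro J hJ
        obtain ⟨hJp, K, Js, hK, hJs, hall⟩ := mem_filter.mp hJ
        exfalso
        have h1 : (Finset.univ.image Js).card = r := by
          rw [card_image_of_injective _ hJs, card_univ, Fintype.card_fin]
        have hsub : Finset.univ.image Js ⊆ A0 := by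
          intro x hx
          obtain ⟨i, _, rfl⟩ := mem_image.mp hx
          exact (hall i).2.1
        have := card_le_card hsub
        omega
  rw [hfix t] at ht
  have hpc : ((range n).powersetCard j).card = n.choose j := by
    rw [card_powersetCard, card_range]
  rw [← ht] at hpc
  omega

theorem stmt7 (k j r m : ℕ) (hm1 : 2 * j ≤ k + m) (hmj : m < j) (hjk : j ≤ k - 2)
    (hr : 1 ≤ r) :
    ∃ n0, ∀ n ≥ n0,
      (∀ (M : Finset ℕ) (S : Finset (Finset ℕ)), (∀ J ∈ S, J ⊆ range n) →
        IsStar m j M S → S.card = r → Percolates (range n) k j r S) ∧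
      ellMin n k j r = r := by
  classical
  refine ⟨2 * (r * k) + j + m + r + (m + r * j) + 1, fun n hn => ?_⟩
  have hperc : ∀ (M : Finset ℕ) (S : Finset (Finset ℕ)), (∀ J ∈ S, J ⊆ range n) →
      IsStar m j M S → S.card = r → Percolates (range n) k j r S := by
    intro M S h1 h2 h3
    exact star_percolates k j r m n hm1 hmj hjk hr M S h1 h2 h3 (by omega)
  refine ⟨hperc, ?_⟩
  obtain ⟨S, hSn, hSstar, hScard⟩ := star_construct m j r n hmj (by omega)
  have hSpow : S ⊆ (range n).powersetCard j := fun J hJ =>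
    mem_powersetCard.mpr ⟨hSn _ hJ, (hSstar.2.1 _ hJ).1⟩
  have hrmem : r ∈ {q | ∃ A0 : Finset (Finset ℕ), A0 ⊆ (range n).powersetCard j ∧
      A0.card = q ∧ Percolates (range n) k j r A0} :=
    ⟨S, hSpow, hScard, hperc _ S hSn hSstar hScard⟩
  have hrchoose : r ≤ n.choose j := by
    have h1 : S.card ≤ ((range n).powersetCard j).card := card_le_card hSpow
    rw [card_powersetCard, card_range] at h1
    omega
  unfold ellMin
  refine le_antisymm (Nat.sInf_le hrmem) (le_csInf ⟨r, hrmem⟩ ?_)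
  rintro q ⟨A0, hA0p, hA0c, hA0perc⟩
  by_contra hlt
  exact no_small_percolates n k j r q (by omega) hrchoose A0 hA0c hA0perc
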